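/- The leximax core imputation of the assignment game is unique: there is at most one core imputation whose sorted (decreasing) vector of profits of essential vertices is lexicographically minimal among all core imputations. -/

import Mathlib

open scoped Classical

/-- `M` is a matching in the bipartite graph with edge set `E`. -/
def IsMatching {U V : Type*} (E M : Finset (U × V)) : Prop :=
  M ⊆ E ∧ (∀ e ∈ M, ∀ e' ∈ M, e.1 = e'.1 → e = e') ∧
    (∀ e ∈ M, ∀ e' ∈ M, e.2 = e'.2 → e = e')

/-- Total weight of a set of edges. -/
def matchWeight {U V : Type*} (w : U × V → ℚ) (M : Finset (U × V)) : ℚ :=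
  ∑ e ∈ M, w e

/-- Maximum weight of a matching in `(E, w)`. -/
noncomputable def maxWeight {U V : Type*} [DecidableEq U] [DecidableEq V]
    (E : Finset (U × V)) (w : U × V → ℚ) : ℚ :=
  ((E.powerset).filter (fun M => IsMatching E M)).sup'
    ⟨∅, by simp [IsMatching]⟩ (matchWeight w)

/-- `M` is a maximum weight matching. -/
def IsMaxMatching {U V : Type*} [DecidableEq U] [DecidableEq V]
    (E : Finset (U × V)) (w : U × V → ℚ) (M : Finset (U × V)) : Prop :=
  IsMatching E M ∧ matchWeight w M = maxWeight E w

/-- Core imputations of the assignment game (Shapley–Shubik characterization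
as optimal dual solutions). -/
def InCore {U V : Type*} [Fintype U] [Fintype V] [DecidableEq U] [DecidableEq V]
    (E : Finset (U × V)) (w : U × V → ℚ) (u : U → ℚ) (v : V → ℚ) : Prop :=
  (∀ i, 0 ≤ u i) ∧ (∀ j, 0 ≤ v j) ∧ (∀ e ∈ E, w e ≤ u e.1 + v e.2) ∧
    (∑ i, u i) + (∑ j, v j) = maxWeight E w

/-- A vertex (from either side) is matched in `M`. -/
def MatchedIn {U V : Type*} (M : Finset (U × V)) : U ⊕ V → Prop
  | Sum.inl i => ∃ j, (i, j) ∈ M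
  | Sum.inr j => ∃ i, (i, j) ∈ M

/-- A vertex is essential if it is matched in every maximum weight matching. -/
def EssentialVertex {U V : Type*} [DecidableEq U] [DecidableEq V]
    (E : Finset (U × V)) (w : U × V → ℚ) (q : U ⊕ V) : Prop :=
  ∀ M, IsMaxMatching E w M → MatchedIn M q

/-- Profits of the essential vertices, sorted in increasing order. -/
noncomputable def profitListInc {U V : Type*} [Fintype U] [Fintype V]
    [DecidableEq U] [DecidableEq V]
    (E : Finset (U × V)) (w : U × V → ℚ) (u : U → ℚ) (v : V → ℚ) : List ℚ :=
  ((Finset.univ.filter (fun q : U ⊕ V => EssentialVertex E w q)).val.map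
    (Sum.elim u v)).sort (· ≤ ·)

/-- Profits of the essential vertices, sorted in decreasing order. -/
noncomputable def profitListDec {U V : Type*} [Fintype U] [Fintype V]
    [DecidableEq U] [DecidableEq V]
    (E : Finset (U × V)) (w : U × V → ℚ) (u : U → ℚ) (v : V → ℚ) : List ℚ :=
  (profitListInc E w u v).reverse

/-- `(u, v)` is the leximin core imputation: its increasing sorted list of
profits of essential vertices is lexicographically largest over the core. -/
def IsLeximin {U V : Type*} [Fintype U] [Fintype V] [DecidableEq U] [DecidableEq V]
    (E : Finset (U × V)) (w : U × V → ℚ) (u : U → ℚ) (v : V → ℚ) : Prop :=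
  InCore E w u v ∧ ∀ u' v', InCore E w u' v' →
    profitListInc E w u' v' = profitListInc E w u v ∨
      List.Lex (· < ·) (profitListInc E w u' v') (profitListInc E w u v)

/-- `(u, v)` is the leximax core imputation: its decreasing sorted list of
profits of essential vertices is lexicographically smallest over the core. -/
def IsLeximax {U V : Type*} [Fintype U] [Fintype V] [DecidableEq U] [DecidableEq V]
    (E : Finset (U × V)) (w : U × V → ℚ) (u : U → ℚ) (v : V → ℚ) : Prop :=
  InCore E w u v ∧ ∀ u' v', InCore E w u' v' →
    profitListDec E w u v = profitListDec E w u' v' ∨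
      List.Lex (· < ·) (profitListDec E w u v) (profitListDec E w u' v')


noncomputable def sortDec (m : Multiset ℚ) : List ℚ := (m.sort (· ≤ ·)).reverse

lemma sortDec_coe (m : Multiset ℚ) : ((sortDec m : List ℚ) : Multiset ℚ) = m := by
  unfold sortDec
  rw [Multiset.coe_reverse, Multiset.sort_eq]

lemma mem_sortDec {m : Multiset ℚ} {x : ℚ} (h : x ∈ sortDec m) : x ∈ m := by
  rw [← sortDec_coe m]; exact Multiset.mem_coe.2 h

lemma sortDec_sorted (m : Multiset ℚ) : (sortDec m).Pairwise (· ≥ ·) := by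
  unfold sortDec
  rw [List.pairwise_reverse]
  exact Multiset.pairwise_sort m (· ≤ ·)

lemma sortDec_inj {m₁ m₂ : Multiset ℚ} (h : sortDec m₁ = sortDec m₂) : m₁ = m₂ := by
  rw [← sortDec_coe m₁, ← sortDec_coe m₂, h]

lemma sortDec_eq {m : Multiset ℚ} {l : List ℚ} (hs : l.Pairwise (· ≥ ·))
    (hc : (l : Multiset ℚ) = m) : sortDec m = l :=
  List.Perm.eq_of_pairwise' (sortDec_sorted m) hs (Multiset.coe_eq_coe.1 (by rw [sortDec_coe, hc]))

lemma pairwise_rep (k : ℕ) (t : ℚ) : (List.replicate k t).Pairwise (· ≥ ·) := by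
  induction k with
  | zero => simp
  | succ n ih =>
    rw [List.replicate_succ]
    refine List.Pairwise.cons ?_ ih
    intro y hy
    rw [List.eq_of_mem_replicate hy]

lemma sortDec_split (k : ℕ) (t : ℚ) (r : Multiset ℚ) (h : ∀ x ∈ r, x < t) :
    sortDec (Multiset.replicate k t + r) = List.replicate k t ++ sortDec r := by
  apply sortDec_eq
  · rw [List.pairwise_append]
    refine ⟨pairwise_rep k t, sortDec_sorted r, ?_⟩
    intro x hx y hy
    rw [List.eq_of_mem_replicate hx]
    exact le_of_lt (h y (mem_sortDec hy))
  · rw [← Multiset.coe_add, Multiset.coe_replicate, sortDec_coe]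


lemma lex_append_left (l : List ℚ) {m n : List ℚ} (h : List.Lex (· < ·) m n) :
    List.Lex (· < ·) (l ++ m) (l ++ n) := by
  induction l with
  | nil => exact h
  | cons a t ih => exact List.Lex.cons ih

lemma lex_asymm : ∀ {l₁ l₂ : List ℚ}, List.Lex (· < ·) l₁ l₂ → ¬ List.Lex (· < ·) l₂ l₁ := by
  intro l₁ l₂ h
  induction h with
  | nil => intro h2; cases h2
  | @cons a t1 t2 h ih =>
    intro h2
    cases h2 with
    | cons h' => exact ih h'
    | rel h' => exact absurd h' (lt_irrefl a)
  | @rel a t1 b t2 h =>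
    intro h2
    cases h2 with
    | cons h' => exact absurd h (lt_irrefl a)
    | rel h' => exact absurd (lt_trans h h') (lt_irrefl a)

lemma key {α : Type*} : ∀ (n : ℕ) (S : Finset α) (a b : α → ℚ), S.card ≤ n →
    S.val.map a = S.val.map b → (∃ q ∈ S, a q ≠ b q) →
    List.Lex (· < ·) (sortDec (S.val.map (fun q => (a q + b q) / 2)))
      (sortDec (S.val.map a)) := by
  intro n
  induction n with
  | zero =>
    rintro S a b hcard hab ⟨q0, hq0, -⟩
    rw [Nat.le_zero, Finset.card_eq_zero] at hcard
    subst hcard; exact absurd hq0 (Finset.notMem_empty q0)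
  | succ n ih =>
    rintro S a b hcard hab ⟨q0, hq0, hne0⟩
    have hS : S.Nonempty := ⟨q0, hq0⟩
    set t := S.sup' hS a with ht
    have hat : ∀ q ∈ S, a q ≤ t := fun q hq => Finset.le_sup' a hq
    have hbt : ∀ q ∈ S, b q ≤ t := by
      intro q hq
      have hmem : b q ∈ S.val.map b := Multiset.mem_map_of_mem _ (Finset.mem_def.1 hq)
      rw [← hab] at hmem
      obtain ⟨q', hq', e⟩ := Multiset.mem_map.1 hmem
      rw [← e]; exact hat q' (Finset.mem_def.2 hq')
    set m : α → ℚ := fun q => (a q + b q) / 2 with hm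
    have hmt : ∀ q ∈ S, m q ≤ t := by
      intro q hq; have := hat q hq; have := hbt q hq
      simp only [hm]; linarith
    have hmeqt : ∀ q ∈ S, (m q = t ↔ (a q = t ∧ b q = t)) := by
      intro q hq
      have h1 := hat q hq; have h2 := hbt q hq
      constructor
      · intro h; simp only [hm] at h; constructor <;> linarith
      · rintro ⟨e1, e2⟩; simp only [hm]; rw [e1, e2]; ring
    set p : α → Prop := fun q => a q = t ∧ b q = t with hp
    set pa : α → Prop := fun q => a q = t with hpa
    set Sv := S.val with hSv
    set c := (Sv.filter p).card with hc
    set k := (Sv.filter pa).card with hk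
    -- c ≤ k
    have hck : c ≤ k := by
      apply Multiset.card_le_card
      apply Multiset.monotone_filter_right
      intro q hq; exact hq.1
    -- k ≥ 1
    have hk1 : 1 ≤ k := by
      obtain ⟨q1, hq1, hq1t⟩ := Finset.exists_mem_eq_sup' hS a
      have hin : q1 ∈ Multiset.filter pa Sv :=
        Multiset.mem_filter.2 ⟨Finset.mem_def.1 hq1, hq1t.symm⟩
      have := Multiset.card_pos_iff_exists_mem.2 ⟨q1, hin⟩
      omega
    -- decomposition of M by p
    have memSv : ∀ {q : α}, q ∈ Sv → q ∈ S := fun hq => Finset.mem_def.2 hq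
    have decompM : Sv.map m = Multiset.replicate c t + (Sv.filter (fun q => ¬ p q)).map m := by
      conv_lhs => rw [← Multiset.filter_add_not p Sv]
      rw [Multiset.map_add]
      congr 1
      rw [Multiset.eq_replicate]
      refine ⟨by rw [Multiset.card_map], ?_⟩
      intro x hx
      obtain ⟨q, hq, rfl⟩ := Multiset.mem_map.1 hx
      have hq' := Multiset.mem_filter.1 hq
      exact (hmeqt q (memSv hq'.1)).2 hq'.2
    have hMlt : ∀ x ∈ (Sv.filter (fun q => ¬ p q)).map m, x < t := by
      intro x hx
      obtain ⟨q, hq, rfl⟩ := Multiset.mem_map.1 hx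
      have hq' := Multiset.mem_filter.1 hq
      have h1 := hmt q (memSv hq'.1)
      rcases lt_or_eq_of_le h1 with h | h
      · exact h
      · exact absurd ((hmeqt q (memSv hq'.1)).1 h) hq'.2
    -- decomposition of A by pa
    have decompA : Sv.map a = Multiset.replicate k t + (Sv.filter (fun q => ¬ pa q)).map a := by
      conv_lhs => rw [← Multiset.filter_add_not pa Sv]
      rw [Multiset.map_add]
      congr 1
      rw [Multiset.eq_replicate]
      refine ⟨by rw [Multiset.card_map], ?_⟩
      intro x hx
      obtain ⟨q, hq, rfl⟩ := Multiset.mem_map.1 hx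
      exact (Multiset.mem_filter.1 hq).2
    have hAlt : ∀ x ∈ (Sv.filter (fun q => ¬ pa q)).map a, x < t := by
      intro x hx
      obtain ⟨q, hq, rfl⟩ := Multiset.mem_map.1 hx
      have hq' := Multiset.mem_filter.1 hq
      exact lt_of_le_of_ne (hat q (memSv hq'.1)) hq'.2
    rcases eq_or_lt_of_le hck with hceq | hclt
    · -- Case c = k : recurse
      have hTa : Multiset.filter p Sv = Multiset.filter pa Sv := by
        apply Multiset.eq_of_le_of_card_le
        · exact Multiset.monotone_filter_right Sv (fun q hq => hq.1)
        · omega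
      have hcountb : (Multiset.filter (fun q => b q = t) Sv).card = k := by
        have h1 : Multiset.count t (Sv.map a) = Multiset.count t (Sv.map b) := by rw [hab]
        rw [Multiset.count_map, Multiset.count_map] at h1
        have e1 : Multiset.filter (fun q => t = a q) Sv = Multiset.filter pa Sv :=
          Multiset.filter_congr (fun q _ => eq_comm)
        have e2 : Multiset.filter (fun q => t = b q) Sv = Multiset.filter (fun q => b q = t) Sv :=
          Multiset.filter_congr (fun q _ => eq_comm)
        rw [e1, e2] at h1
        omega
      have hTb : Multiset.filter p Sv = Multiset.filter (fun q => b q = t) Sv := by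
        apply Multiset.eq_of_le_of_card_le
        · exact Multiset.monotone_filter_right Sv (fun q hq => hq.2)
        · omega
      have hnp : ∀ q ∈ Sv, ¬ p q → a q ≠ t ∧ b q ≠ t := by
        intro q hq hnpq
        constructor
        · intro hqa
          have hmm : q ∈ Multiset.filter pa Sv := Multiset.mem_filter.2 ⟨hq, hqa⟩
          rw [← hTa] at hmm
          exact hnpq (Multiset.mem_filter.1 hmm).2
        · intro hqb
          have hmm : q ∈ Multiset.filter (fun q => b q = t) Sv := Multiset.mem_filter.2 ⟨hq, hqb⟩
          rw [← hTb] at hmm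
          exact hnpq (Multiset.mem_filter.1 hmm).2
      have decompA' : Sv.map a = Multiset.replicate k t + (Sv.filter (fun q => ¬ p q)).map a := by
        conv_lhs => rw [← Multiset.filter_add_not p Sv]
        rw [Multiset.map_add]
        congr 1
        rw [Multiset.eq_replicate]
        refine ⟨by rw [Multiset.card_map]; omega, ?_⟩
        intro x hx
        obtain ⟨q, hq, rfl⟩ := Multiset.mem_map.1 hx
        exact (Multiset.mem_filter.1 hq).2.1
      have decompB' : Sv.map b = Multiset.replicate k t + (Sv.filter (fun q => ¬ p q)).map b := by
        conv_lhs => rw [← Multiset.filter_add_not p Sv]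
        rw [Multiset.map_add]
        congr 1
        rw [Multiset.eq_replicate]
        refine ⟨by rw [Multiset.card_map]; omega, ?_⟩
        intro x hx
        obtain ⟨q, hq, rfl⟩ := Multiset.mem_map.1 hx
        exact (Multiset.mem_filter.1 hq).2.2
      have hA'lt : ∀ x ∈ (Sv.filter (fun q => ¬ p q)).map a, x < t := by
        intro x hx
        obtain ⟨q, hq, rfl⟩ := Multiset.mem_map.1 hx
        have hq' := Multiset.mem_filter.1 hq
        exact lt_of_le_of_ne (hat q (memSv hq'.1)) ((hnp q hq'.1 hq'.2).1)
      set S' := S.filter (fun q => ¬ p q) with hS'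
      have hS'v : S'.val = Multiset.filter (fun q => ¬ p q) Sv := Finset.filter_val _ _
      have hcards : Multiset.card Sv = c + Multiset.card S'.val := by
        conv_lhs => rw [← Multiset.filter_add_not p Sv]
        rw [Multiset.card_add, hS'v]
      have hS'card : S'.card ≤ n := by
        have h1 : S.card = Multiset.card Sv := rfl
        have h2 : S'.card = Multiset.card S'.val := rfl
        omega
      have hmapeq : S'.val.map a = S'.val.map b := by
        rw [hS'v]
        have h3 := hab
        rw [decompA', decompB'] at h3
        exact add_left_cancel h3
      have hq0' : q0 ∈ S' := by
        refine Finset.mem_filter.2 ⟨hq0, ?_⟩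
        rintro ⟨e1, e2⟩
        exact hne0 (e1.trans e2.symm)
      have hIH := ih S' a b hS'card hmapeq ⟨q0, hq0', hne0⟩
      rw [decompM, decompA', sortDec_split c t _ hMlt, sortDec_split k t _ hA'lt, ← hceq]
      apply lex_append_left
      rw [hS'v] at hIH
      exact hIH
    · -- Case c < k
      rw [decompM, decompA, sortDec_split c t _ hMlt, sortDec_split k t _ hAlt]
      have hrep : List.replicate k t = List.replicate c t ++ List.replicate (k - c) t := by
        rw [← List.replicate_add]
        congr 1
        omega
      rw [hrep, List.append_assoc]
      apply lex_append_left
      have h1 : k - c = (k - c - 1) + 1 := by omega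
      rw [h1, List.replicate_succ, List.cons_append]
      cases hM' : sortDec ((Sv.filter (fun q => ¬ p q)).map m) with
      | nil => exact List.Lex.nil
      | cons x xs =>
        apply List.Lex.rel
        have hx : x ∈ sortDec ((Sv.filter (fun q => ¬ p q)).map m) := by
          rw [hM']; exact List.mem_cons_self
        exact hMlt x (mem_sortDec hx)

section
variable {U V : Type*} [Fintype U] [Fintype V] [DecidableEq U] [DecidableEq V]
  {E : Finset (U × V)} {w : U × V → ℚ} {u : U → ℚ} {v : V → ℚ}

lemma core_mid (h : InCore E w u v) {u' : U → ℚ} {v' : V → ℚ} (h' : InCore E w u' v') :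
    InCore E w (fun i => (u i + u' i) / 2) (fun j => (v j + v' j) / 2) := by
  obtain ⟨h1, h2, h3, h4⟩ := h
  obtain ⟨h1', h2', h3', h4'⟩ := h'
  refine ⟨fun i => by have := h1 i; have := h1' i; positivity,
          fun j => by have := h2 j; have := h2' j; positivity,
          fun e he => by have := h3 e he; have := h3' e he; linarith, ?_⟩
  have e1 : ∑ i, (u i + u' i) / 2 = ((∑ i, u i) + ∑ i, u' i) / 2 := by
    rw [← Finset.sum_add_distrib, Finset.sum_div]
  have e2 : ∑ j, (v j + v' j) / 2 = ((∑ j, v j) + ∑ j, v' j) / 2 := by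
    rw [← Finset.sum_add_distrib, Finset.sum_div]
  rw [e1, e2]
  linarith

lemma core_unmatched_zero (h : InCore E w u v) {M : Finset (U × V)}
    (hM : IsMaxMatching E w M) (q : U ⊕ V) (hq : ¬ MatchedIn M q) :
    Sum.elim u v q = 0 := by
  obtain ⟨h1, h2, h3, h4⟩ := h
  obtain ⟨⟨hME, hMl, hMr⟩, hMw⟩ := hM
  have hA : ∑ e ∈ M, u e.1 = ∑ i ∈ M.image Prod.fst, u i :=
    (Finset.sum_image (fun e he e' he' hee => hMl e he e' he' hee)).symm
  have hB : ∑ e ∈ M, v e.2 = ∑ j ∈ M.image Prod.snd, v j :=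
    (Finset.sum_image (fun e he e' he' hee => hMr e he e' he' hee)).symm
  have hle : matchWeight w M ≤ ∑ e ∈ M, u e.1 + ∑ e ∈ M, v e.2 := by
    rw [← Finset.sum_add_distrib]
    exact Finset.sum_le_sum (fun e he => h3 e (hME he))
  have hBle : ∑ j ∈ M.image Prod.snd, v j ≤ ∑ j, v j :=
    Finset.sum_le_sum_of_subset_of_nonneg (Finset.subset_univ _) (fun j _ _ => h2 j)
  have hAle : ∑ i ∈ M.image Prod.fst, u i ≤ ∑ i, u i :=
    Finset.sum_le_sum_of_subset_of_nonneg (Finset.subset_univ _) (fun i _ _ => h1 i)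
  cases q with
  | inl i =>
    have hni : i ∉ M.image Prod.fst := by
      intro hmem
      obtain ⟨e, he, he1⟩ := Finset.mem_image.1 hmem
      exact hq ⟨e.2, by rw [← he1]; exact he⟩
    have hAle' : ∑ i' ∈ M.image Prod.fst, u i' + u i ≤ ∑ i', u i' := by
      rw [add_comm, ← Finset.sum_insert hni]
      exact Finset.sum_le_sum_of_subset_of_nonneg (Finset.subset_univ _) (fun i' _ _ => h1 i')
    have := h1 i
    simp only [Sum.elim_inl]
    linarith [hMw, h4, hle, hA, hB, hBle]
  | inr j =>
    have hnj : j ∉ M.image Prod.snd := by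
      intro hmem
      obtain ⟨e, he, he2⟩ := Finset.mem_image.1 hmem
      exact hq ⟨e.1, by rw [← he2]; exact he⟩
    have hBle' : ∑ j' ∈ M.image Prod.snd, v j' + v j ≤ ∑ j', v j' := by
      rw [add_comm, ← Finset.sum_insert hnj]
      exact Finset.sum_le_sum_of_subset_of_nonneg (Finset.subset_univ _) (fun j' _ _ => h2 j')
    have := h2 j
    simp only [Sum.elim_inr]
    linarith [hMw, h4, hle, hA, hB, hAle]
end


/-- The leximax core imputation is unique. -/
theorem leximax_unique {U V : Type*} [Fintype U] [Fintype V]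
    [DecidableEq U] [DecidableEq V]
    (E : Finset (U × V)) (w : U × V → ℚ)
    (u : U → ℚ) (v : V → ℚ) (u' : U → ℚ) (v' : V → ℚ)
    (h : IsLeximax E w u v) (h' : IsLeximax E w u' v') :
    u = u' ∧ v = v' := by
  classical
  have hcore := h.1
  have hcore' := h'.1
  have hL : profitListDec E w u v = profitListDec E w u' v' := by
    rcases h.2 u' v' hcore' with e | l1
    · exact e
    rcases h'.2 u v hcore with e | l2
    · exact e.symm
    · exact absurd l1 (lex_asymm l2)
  have hAB : (Finset.univ.filter (fun q : U ⊕ V => EssentialVertex E w q)).val.map (Sum.elim u v)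
      = (Finset.univ.filter (fun q : U ⊕ V => EssentialVertex E w q)).val.map (Sum.elim u' v') :=
    sortDec_inj hL
  have hess : ∀ q ∈ Finset.univ.filter (fun q : U ⊕ V => EssentialVertex E w q),
      Sum.elim u v q = Sum.elim u' v' q := by
    by_contra hcon
    push_neg at hcon
    have hkey := key (Finset.univ.filter (fun q : U ⊕ V => EssentialVertex E w q)).card
      (Finset.univ.filter (fun q : U ⊕ V => EssentialVertex E w q))
      (Sum.elim u v) (Sum.elim u' v') le_rfl hAB hcon
    have hmidcore := core_mid hcore hcore'
    have hmideq : (fun q : U ⊕ V => (Sum.elim u v q + Sum.elim u' v' q) / 2) =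
        Sum.elim (fun i => (u i + u' i) / 2) (fun j => (v j + v' j) / 2) := by
      funext q; cases q <;> rfl
    rw [hmideq] at hkey
    have hkey' : List.Lex (· < ·)
        (profitListDec E w (fun i => (u i + u' i) / 2) (fun j => (v j + v' j) / 2))
        (profitListDec E w u v) := hkey
    rcases h.2 _ _ hmidcore with e | l
    · rw [← e] at hkey'
      exact (lex_asymm hkey') hkey'
    · exact (lex_asymm hkey') l
  have hzero : ∀ q, ¬ EssentialVertex E w q →
      Sum.elim u v q = 0 ∧ Sum.elim u' v' q = 0 := by
    intro q hq
    simp only [EssentialVertex, not_forall] at hq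
    obtain ⟨M, hM, hMq⟩ := hq
    exact ⟨core_unmatched_zero hcore hM q hMq, core_unmatched_zero hcore' hM q hMq⟩
  have hall : ∀ q, Sum.elim u v q = Sum.elim u' v' q := by
    intro q
    by_cases hq : EssentialVertex E w q
    · exact hess q (Finset.mem_filter.2 ⟨Finset.mem_univ q, hq⟩)
    · obtain ⟨e1, e2⟩ := hzero q hq
      rw [e1, e2]
  exact ⟨funext fun i => hall (Sum.inl i), funext fun j => hall (Sum.inr j)⟩
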